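/- For integers k ≥ r ≥ 1 and m ≥ 1, adding k(m−1), k(m−2), …, k, 0 to the parts of a partition in BP_{k,r}(m) gives a bijection onto BD_{k,r}(m); consequently Σ_{λ ∈ BD_{k,r}(m)} q^{|λ|} = q^{k·C(m,2)} Σ_{λ ∈ BP_{k,r}(m)} q^{|λ|}, where C(m,2) = m(m−1)/2. -/

import Mathlib

/-- The finite q-Pochhammer symbol `(t;q)_n = ∏_{i=0}^{n-1} (1 - t qⁱ)`. -/
noncomputable def qPoch (t q : ℂ) (n : ℕ) : ℂ := ∏ i ∈ Finset.range n, (1 - t * q ^ i)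

/-- The infinite q-Pochhammer symbol `(t;q)_∞ = ∏_{i≥0} (1 - t qⁱ)`. -/
noncomputable def qPochInf (t q : ℂ) : ℂ := ∏' i : ℕ, (1 - t * q ^ i)

/-- The Gaussian binomial coefficient `[A choose B]` in base `q`:
`(q;q)_A / ((q;q)_B (q;q)_{A-B})` for `A ≥ B ≥ 0`, and `0` otherwise. -/
noncomputable def gbinom (q : ℂ) (A B : ℕ) : ℂ :=
  if B ≤ A then qPoch q q A / (qPoch q q B * qPoch q q (A - B)) else 0

/-- `lcount k c l` is the number of parts of `l` congruent to `c` modulo `k`. -/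
def lcount (k c : ℕ) (l : List ℕ) : ℕ := (l.filter (fun x => x % k = c % k)).length

/-- `phi k N` is the residue of `N` modulo `k`, taken in `{1, …, k}`. -/
def phi (k N : ℕ) : ℕ := if N % k = 0 then k else N % k

/-- Add `k(ℓ-1), k(ℓ-2), …, k, 0` to the successive parts of a list of length `ℓ`. -/
def stretch (k : ℕ) (l : List ℕ) : List ℕ := l.mapIdx fun i x => x + k * (l.length - 1 - i)

/-- Membership in `BP_{k,r}(m)`: partitions with exactly `m` parts, all between `1` and `r`. -/
def memBP (r m : ℕ) (l : List ℕ) : Prop :=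
  l.Pairwise (· ≥ ·) ∧ l.length = m ∧ ∀ x ∈ l, 1 ≤ x ∧ x ≤ r

/-- Membership in `BD_{k,r}(m)`: partitions `(λ_1,…,λ_m)` with exactly `m` parts, each part
`≡ s (mod k)` for some `1 ≤ s ≤ r`, `φ_{k,r}(λ_i) ≥ φ_{k,r}(λ_{i+1})` and
`k ≤ λ_i - λ_{i+1} < 2k` for consecutive parts, and `1 ≤ λ_m ≤ r`. -/
def memBD (k r m : ℕ) (l : List ℕ) : Prop :=
  l.Pairwise (· ≥ ·) ∧ l.length = m ∧ (∀ x ∈ l, 0 < x ∧ 1 ≤ phi k x ∧ phi k x ≤ r) ∧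
    l.Chain' (fun x y => phi k y ≤ phi k x ∧ y + k ≤ x ∧ x < y + 2 * k) ∧
    (∀ x : ℕ, l.getLast? = some x → 1 ≤ x ∧ x ≤ r)


section Aux

theorem stretch_cons (k a : ℕ) (l : List ℕ) :
    stretch k (a :: l) = (a + k * l.length) :: stretch k l := by
  simp only [stretch, List.mapIdx_cons, List.length_cons]
  refine congrArg₂ List.cons (by norm_num) ?_
  congr 1
  funext i x
  congr 2
  omega

theorem stretch_nil (k : ℕ) : stretch k [] = [] := rfl

theorem stretch_length (k : ℕ) (l : List ℕ) : (stretch k l).length = l.length := by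
  simp [stretch]

theorem stretch_sum (k : ℕ) (l : List ℕ) :
    (stretch k l).sum = l.sum + k * (l.length.choose 2) := by
  induction l with
  | nil => simp [stretch_nil]
  | cons a l ih =>
    rw [stretch_cons, List.sum_cons, ih, List.sum_cons, List.length_cons]
    have : (l.length + 1).choose 2 = l.length.choose 2 + l.length := by
      rw [Nat.choose_two_right, Nat.choose_two_right]
      have := Nat.triangle_succ l.length
      omega
    rw [this]
    ring

theorem stretch_inj (k : ℕ) : Function.Injective (stretch k) := by
  intro l1 l2 h
  have hlen : l1.length = l2.length := by
    rw [← stretch_length k l1, ← stretch_length k l2, h]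
  induction l1 generalizing l2 with
  | nil => cases l2 with
    | nil => rfl
    | cons b t => simp at hlen
  | cons a t ih =>
    cases l2 with
    | nil => simp at hlen
    | cons b t2 =>
      rw [stretch_cons, stretch_cons] at h
      simp only [List.cons.injEq] at h ⊢
      simp only [List.length_cons] at hlen
      have hl : t.length = t2.length := by omega
      rw [hl] at h
      exact ⟨by omega, ih h.2 hl⟩

theorem phi_add_mul (k x n : ℕ) : phi k (x + k * n) = phi k x := by
  unfold phi
  rw [Nat.add_mul_mod_self_left]

theorem phi_of_le (k x : ℕ) (h1 : 1 ≤ x) (h2 : x ≤ k) : phi k x = x := by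
  unfold phi
  rcases eq_or_lt_of_le h2 with h | h
  · subst h; simp
  · rw [Nat.mod_eq_of_lt h, if_neg (by omega)]

theorem forward (k r : ℕ) (hr : 1 ≤ r) (hrk : r ≤ k) :
    ∀ l : List ℕ, l.Pairwise (· ≥ ·) → (∀ x ∈ l, 1 ≤ x ∧ x ≤ r) →
    (∀ x ∈ stretch k l, 0 < x ∧ 1 ≤ phi k x ∧ phi k x ≤ r)
    ∧ (stretch k l).Chain' (fun x y => phi k y ≤ phi k x ∧ y + k ≤ x ∧ x < y + 2 * k)
    ∧ (∀ x : ℕ, (stretch k l).getLast? = some x → 1 ≤ x ∧ x ≤ r) := by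
  intro l
  induction l with
  | nil => intro _ _; simp [stretch_nil, List.Chain']
  | cons a t ih =>
    intro hsort hmem
    have hsort' : t.Pairwise (· ≥ ·) := hsort.of_cons
    have hmem' : ∀ x ∈ t, 1 ≤ x ∧ x ≤ r := fun x hx => hmem x (List.mem_cons_of_mem _ hx)
    obtain ⟨ih2, ih3, ih4⟩ := ih hsort' hmem'
    have ha := hmem a (List.mem_cons_self)
    have hphia : phi k (a + k * t.length) = a := by
      rw [phi_add_mul, phi_of_le k a ha.1 (le_trans ha.2 hrk)]
    rw [stretch_cons]
    refine ⟨?_, ?_, ?_⟩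
    · intro x hx
      rcases List.mem_cons.mp hx with h | h
      · subst h
        rw [hphia]
        exact ⟨by omega, ha.1, ha.2⟩
      · exact ih2 x h
    · cases t with
      | nil => simp [stretch_nil, List.Chain']
      | cons b t2 =>
        rw [stretch_cons]
        rw [stretch_cons] at ih3
        refine List.IsChain.cons_cons ?_ ih3
        have hb := hmem' b (List.mem_cons_self)
        have hab : b ≤ a := (List.pairwise_cons.mp hsort).1 b (List.mem_cons_self)
        have hphib : phi k (b + k * t2.length) = b := by
          rw [phi_add_mul, phi_of_le k b hb.1 (le_trans hb.2 hrk)]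
        simp only [List.length_cons]
        rw [hphib]
        have hk : k * (t2.length + 1) = k * t2.length + k := by ring
        refine ⟨?_, by omega, by omega⟩
        rw [phi_add_mul, phi_of_le k a ha.1 (le_trans ha.2 hrk)]; exact hab
    · intro x hx
      cases t with
      | nil =>
        rw [stretch_nil] at hx
        simp at hx
        omega
      | cons b t2 =>
        rw [stretch_cons k b t2, List.getLast?_cons_cons] at hx
        exact ih4 x (by rw [stretch_cons]; exact hx)

theorem backward (k r : ℕ) (hr : 1 ≤ r) (hrk : r ≤ k) :
    ∀ l : List ℕ,
    (∀ x ∈ l, 0 < x ∧ 1 ≤ phi k x ∧ phi k x ≤ r) →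
    l.Chain' (fun x y => phi k y ≤ phi k x ∧ y + k ≤ x ∧ x < y + 2 * k) →
    (∀ x : ℕ, l.getLast? = some x → 1 ≤ x ∧ x ≤ r) →
    ∃ l' : List ℕ, l'.Pairwise (· ≥ ·) ∧ (∀ x ∈ l', 1 ≤ x ∧ x ≤ r) ∧ stretch k l' = l := by
  intro l
  induction l with
  | nil => intro _ _ _; exact ⟨[], by simp [stretch_nil]⟩
  | cons a t ih =>
    intro hmem hchain hlast
    have hmem' : ∀ x ∈ t, 0 < x ∧ 1 ≤ phi k x ∧ phi k x ≤ r :=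
      fun x hx => hmem x (List.mem_cons_of_mem _ hx)
    have hchain' : t.Chain' _ := hchain.tail
    have hlast' : ∀ x : ℕ, t.getLast? = some x → 1 ≤ x ∧ x ≤ r := by
      intro x hx
      apply hlast
      cases t with
      | nil => simp at hx
      | cons b t2 => rw [List.getLast?_cons_cons]; exact hx
    obtain ⟨t', ht'sort, ht'mem, ht'eq⟩ := ih hmem' hchain' hlast'
    cases t with
    | nil =>
      have ha : 1 ≤ a ∧ a ≤ r := hlast a (by simp)
      refine ⟨[a], by simp, by simpa using ha, ?_⟩
      rw [stretch_cons, stretch_nil]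
      simp
    | cons b t2 =>
      -- t' is nonempty since stretch preserves length
      have ht'len : t'.length = t2.length + 1 := by
        rw [← stretch_length k t', ht'eq]; simp
      cases t' with
      | nil => simp at ht'len
      | cons b' t2' =>
        rw [stretch_cons] at ht'eq
        have hbb' : b = b' + k * t2'.length ∧ stretch k t2' = t2 := by
          have := List.cons.injEq .. ▸ ht'eq
          exact ⟨(List.cons.injEq .. ▸ ht'eq : _) |>.1.symm, ((List.cons.injEq .. ▸ ht'eq : _)).2⟩
        obtain ⟨hb, ht2⟩ := hbb'
        have hrel := List.isChain_cons_cons.mp hchain |>.1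
        obtain ⟨hphi, hk1, hk2⟩ := hrel
        have hb' : 1 ≤ b' ∧ b' ≤ r := ht'mem b' (List.mem_cons_self)
        -- define a'
        set n := t2'.length with hn
        have ha_ge : b' + k * n + k ≤ a := by omega
        set a' := a - k * n - k with ha'
        have haeq : a = a' + k * (n + 1) := by
          have : k * (n + 1) = k * n + k := by ring
          omega
        have hphib : phi k b = b' := by
          rw [hb, phi_add_mul, phi_of_le k b' hb'.1 (le_trans hb'.2 hrk)]
        have hphia : phi k a = phi k a' := by rw [haeq, phi_add_mul]
        have ha'ge : b' ≤ a' := by omega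
        have ha'lt : a' < b' + k := by omega
        have hphia' : b' ≤ phi k a' := by omega
        have hphiar : phi k a ≤ r := (hmem a (List.mem_cons_self)).2.2
        have ha'r : a' ≤ r := by
          by_cases hak : a' ≤ k
          · have : phi k a' = a' := phi_of_le k a' (by omega) hak
            rw [hphia, this] at hphiar
            exact hphiar
          · exfalso
            push_neg at hak
            have h1 : a' - k < k := by omega
            have h2 : a' % k = a' - k := by
              rw [Nat.mod_eq_sub_mod (by omega), Nat.mod_eq_of_lt h1]
            have h3 : phi k a' = a' - k := by
              unfold phi
              rw [h2, if_neg (by omega)]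
            omega
        refine ⟨a' :: b' :: t2', ?_, ?_, ?_⟩
        · rw [List.pairwise_cons]
          refine ⟨?_, ht'sort⟩
          intro x hx
          rcases List.mem_cons.mp hx with h | h
          · omega
          · have := List.pairwise_cons.mp ht'sort |>.1 x h
            omega
        · intro x hx
          rcases List.mem_cons.mp hx with h | h
          · subst h; exact ⟨by omega, ha'r⟩
          · exact ht'mem x h
        · rw [stretch_cons]
          simp only [List.length_cons]
          rw [stretch_cons, ht2, ← hb, ← haeq]

end Aux

/-- Adding `k(m-1), k(m-2), …, k, 0` to the parts gives a bijection from `BP_{k,r}(m)` onto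
`BD_{k,r}(m)`; consequently
`Σ_{λ ∈ BD_{k,r}(m)} q^{|λ|} = q^{k C(m,2)} Σ_{λ ∈ BP_{k,r}(m)} q^{|λ|}`. -/
theorem shift_BP_to_BD (k r m : ℕ) (hr : 1 ≤ r) (hrk : r ≤ k) (hm : 1 ≤ m) :
    Set.BijOn (stretch k) {l : List ℕ | memBP r m l} {l : List ℕ | memBD k r m l}
    ∧ ∀ q : ℂ,
        ∑ᶠ l ∈ {l : List ℕ | memBD k r m l}, q ^ l.sum
          = q ^ (k * Nat.choose m 2) * ∑ᶠ l ∈ {l : List ℕ | memBP r m l}, q ^ l.sum := by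
  have hbij : Set.BijOn (stretch k) {l : List ℕ | memBP r m l} {l : List ℕ | memBD k r m l} := by
    refine ⟨?_, (stretch_inj k).injOn, ?_⟩
    · intro l hl
      obtain ⟨hsort, hlen, hmem⟩ := hl
      obtain ⟨h1, h2, h3⟩ := forward k r hr hrk l hsort hmem
      have hsorted : (stretch k l).Pairwise (· ≥ ·) := by
        rw [← List.isChain_iff_pairwise]
        exact h2.imp (fun h => by omega)
      exact ⟨hsorted, by rw [stretch_length, hlen], h1, h2, h3⟩
    · intro l hl
      obtain ⟨hsort, hlen, hmem, hchain, hlast⟩ := hl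
      obtain ⟨l', h1, h2, h3⟩ := backward k r hr hrk l hmem hchain hlast
      refine ⟨l', ⟨h1, ?_, h2⟩, h3⟩
      rw [← stretch_length k l', h3, hlen]
  refine ⟨hbij, fun q => ?_⟩
  have key : ∑ᶠ l ∈ {l : List ℕ | memBP r m l}, (q ^ (k * Nat.choose m 2) * q ^ l.sum)
      = ∑ᶠ l ∈ {l : List ℕ | memBD k r m l}, q ^ l.sum := by
    refine finsum_mem_eq_of_bijOn (stretch k) hbij ?_
    intro l hl
    rw [stretch_sum, hl.2.1, pow_add, mul_comm]
  rw [← key]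
  have pull : ∀ (c : ℂ) (f : List ℕ → ℂ) (S : Set (List ℕ)),
      ∑ᶠ l ∈ S, (c * f l) = c * ∑ᶠ l ∈ S, f l := by
    intro c f S
    rw [finsum_mem_def, finsum_mem_def, ← smul_eq_mul (a := c), smul_finsum]
    congr 1
    funext x
    by_cases hx : x ∈ S <;> simp [hx]
  exact (pull _ _ _).symm ▸ rfl
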